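/- Let n ≥ 1 and k ≥ 1 be integers, let y ∈ ℝⁿ with |y| = 1, and let Y be Brendle's vector field. Then Y is tangent to the unit sphere away from y: for every x ∈ ℝⁿ with |x| = 1 and x ≠ y, one has ⟨Y(x), x⟩ = 0. -/

import Mathlib

open Metric Set

/-- Brendle's vector field `Y(x) = x/2 − (x−y)/|x−y|^k − ((k−2)/2)·∫₀¹ (t·x − y)/|t·x − y|^k dt`. -/
noncomputable def brendleY (n k : ℕ) (y : EuclideanSpace ℝ (Fin n)) :
    EuclideanSpace ℝ (Fin n) → EuclideanSpace ℝ (Fin n) := fun x =>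
  (2 : ℝ)⁻¹ • x - (‖x - y‖ ^ k)⁻¹ • (x - y) -
    (((k : ℝ) - 2) / 2) • ∫ t in (0 : ℝ)..1, (‖t • x - y‖ ^ k)⁻¹ • (t • x - y)

/-- Lemma (Brendle, (ii)): `Y` is tangent to the unit sphere away from `y`. -/
theorem brendleY_tangent_sphere (n k : ℕ) (hn : 1 ≤ n) (hk : 1 ≤ k)
    (y : EuclideanSpace ℝ (Fin n)) (hy : ‖y‖ = 1)
    (x : EuclideanSpace ℝ (Fin n)) (hx : ‖x‖ = 1) (hxy : x ≠ y) :
    (inner ℝ (brendleY n k y x) x : ℝ) = 0 := by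
  set c : ℝ := inner ℝ x y with hc
  have hx2 : (inner ℝ x x : ℝ) = 1 := by
    rw [real_inner_self_eq_norm_sq, hx]; norm_num
  have hyx : (inner ℝ y x : ℝ) = c := (real_inner_comm x y).trans hc.symm
  -- squared norm of t•x - y
  have hnorm : ∀ t : ℝ, ‖t • x - y‖ ^ 2 = t ^ 2 - 2 * c * t + 1 := by
    intro t
    rw [@norm_sub_sq_real, norm_smul, real_inner_smul_left, ← hc, hx, hy]
    simp [mul_pow, sq_abs]
    ring
  -- positivity on [0,1]
  have hpos : ∀ t ∈ Set.uIcc (0:ℝ) 1, 0 < ‖t • x - y‖ := by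
    intro t ht
    rw [Set.uIcc_of_le (by norm_num)] at ht
    rw [norm_pos_iff, sub_ne_zero]
    intro h
    rcases eq_or_lt_of_le ht.2 with h1 | h1
    · apply hxy; rw [h1, one_smul] at h; exact h
    · have : ‖t • x‖ = ‖y‖ := by rw [h]
      rw [norm_smul, hx, hy, mul_one, Real.norm_eq_abs, abs_of_nonneg ht.1] at this
      linarith
  have hxy1 : 0 < ‖x - y‖ := by
    have := hpos 1 (by rw [Set.uIcc_of_le (by norm_num)]; exact ⟨by norm_num, le_refl 1⟩)
    rwa [one_smul] at this
  have hxy2 : ‖x - y‖ ^ 2 = 2 - 2 * c := by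
    have := hnorm 1; rw [one_smul] at this; rw [this]; ring
  have hccpos : 0 < 2 - 2 * c := by rw [← hxy2]; positivity
  -- continuity / integrability of the vector integrand
  have hcont : ContinuousOn (fun t : ℝ => (‖t • x - y‖ ^ k)⁻¹ • (t • x - y))
      (Set.uIcc (0:ℝ) 1) := by
    apply ContinuousOn.fun_smul
    · apply ContinuousOn.inv₀
      · fun_prop
      · intro t ht
        exact pow_ne_zero _ (ne_of_gt (hpos t ht))
    · fun_prop
  have hInt : IntervalIntegrable (fun t : ℝ => (‖t • x - y‖ ^ k)⁻¹ • (t • x - y))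
      MeasureTheory.volume 0 1 := hcont.intervalIntegrable
  -- swap inner and integral
  have hswap : (inner ℝ (∫ t in (0:ℝ)..1, (‖t • x - y‖ ^ k)⁻¹ • (t • x - y)) x : ℝ)
      = ∫ t in (0:ℝ)..1, (‖t • x - y‖ ^ k)⁻¹ * (t - c) := by
    have h := (innerSL ℝ x).intervalIntegral_comp_comm hInt
    simp only [innerSL_apply_apply] at h
    rw [real_inner_comm, ← h]
    apply intervalIntegral.integral_congr
    intro t _
    simp only [real_inner_smul_right, inner_sub_right, real_inner_smul_right, hx2, ← hc]
    ring
  -- expand the inner product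
  have hexp : (inner ℝ (brendleY n k y x) x : ℝ)
      = (2:ℝ)⁻¹ - (‖x - y‖ ^ k)⁻¹ * (1 - c)
        - (((k : ℝ) - 2) / 2) * ∫ t in (0:ℝ)..1, (‖t • x - y‖ ^ k)⁻¹ * (t - c) := by
    rw [brendleY]
    simp only [inner_sub_left, real_inner_smul_left, hx2, hswap, inner_sub_left, hyx]
    ring
  by_cases hk2 : k = 2
  · subst hk2
    rw [hexp]
    have : (‖x - y‖ ^ 2)⁻¹ * (1 - c) = 2⁻¹ := by
      have h1c : (1 - c) ≠ 0 := by linarith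
      rw [hxy2, show (2 - 2 * c) = 2 * (1 - c) by ring, mul_inv, mul_assoc, inv_mul_cancel₀ h1c, mul_one]
    rw [this]
    push_cast
    ring
  · -- k ≠ 2 : use the fundamental theorem of calculus
    set p : ℝ := (2 - (k : ℝ)) / 2 with hp
    have hk2' : (2 : ℝ) - (k : ℝ) ≠ 0 := by
      intro h
      apply hk2
      have : (k : ℝ) = 2 := by linarith
      exact_mod_cast this
    set F : ℝ → ℝ := fun t => (t ^ 2 - 2 * c * t + 1) ^ p / (2 - (k:ℝ)) with hF
    have hderiv : ∀ t ∈ Set.uIcc (0:ℝ) 1,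
        HasDerivAt F ((‖t • x - y‖ ^ k)⁻¹ * (t - c)) t := by
      intro t ht
      have hht : 0 < t ^ 2 - 2 * c * t + 1 := by
        rw [← hnorm t]; exact pow_pos (hpos t ht) 2
      have h1 : HasDerivAt (fun t : ℝ => t ^ 2 - 2 * c * t + 1) (2 * t - 2 * c) t := by
        have := ((hasDerivAt_pow 2 t).sub ((hasDerivAt_id t).const_mul (2 * c))).add_const 1
        exact this.congr_deriv (by norm_num)
      have h2 : HasDerivAt (fun u : ℝ => u ^ p) (p * (t ^ 2 - 2 * c * t + 1) ^ (p - 1))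
          (t ^ 2 - 2 * c * t + 1) :=
        Real.hasDerivAt_rpow_const (Or.inl (ne_of_gt hht))
      have h3 := (h2.comp t h1).div_const (2 - (k:ℝ))
      refine HasDerivAt.congr_deriv h3 ?_
      symm
      have hnn : (0:ℝ) ≤ ‖t • x - y‖ := norm_nonneg _
      have key : (t ^ 2 - 2 * c * t + 1) ^ (p - 1) = (‖t • x - y‖ ^ k)⁻¹ := by
        rw [← hnorm t, ← Real.rpow_natCast (‖t • x - y‖) 2, ← Real.rpow_natCast (‖t • x - y‖) k,
          ← Real.rpow_mul hnn, ← Real.rpow_neg hnn]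
        congr 1
        push_cast
        rw [hp]
        ring
      rw [key, hp, eq_div_iff hk2']
      ring
    have hgInt : IntervalIntegrable (fun t : ℝ => (‖t • x - y‖ ^ k)⁻¹ * (t - c))
        MeasureTheory.volume 0 1 := by
      apply ContinuousOn.intervalIntegrable
      apply ContinuousOn.fun_mul
      · apply ContinuousOn.inv₀
        · fun_prop
        · intro t ht
          exact pow_ne_zero _ (ne_of_gt (hpos t ht))
      · fun_prop
    have hftc := intervalIntegral.integral_eq_sub_of_hasDerivAt hderiv hgInt
    have hF1 : F 1 = (2 - 2 * c) ^ p / (2 - (k:ℝ)) := by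
      rw [hF]; norm_num; ring_nf
    have hF0 : F 0 = 1 / (2 - (k:ℝ)) := by
      rw [hF]; norm_num
    rw [hexp, hftc, hF1, hF0]
    -- now pure algebra with A = (2-2c)^p
    have hA : (‖x - y‖ ^ k)⁻¹ * (1 - c) = (2 - 2 * c) ^ p / 2 := by
      have h1 : (2 - 2*c : ℝ) ^ p = ‖x - y‖ ^ ((2:ℝ) - k) := by
        rw [← hxy2, ← Real.rpow_natCast (‖x - y‖) 2, ← Real.rpow_mul (le_of_lt hxy1)]
        congr 1
        rw [hp]; push_cast; ring
      rw [h1, Real.rpow_sub hxy1, Real.rpow_natCast]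
      have h2 : ‖x - y‖ ^ (2:ℝ) = 2 - 2 * c := by
        rw [← hxy2, ← Real.rpow_natCast (‖x - y‖) 2]
        norm_num
      rw [h2]
      have hkpos : (0:ℝ) < ‖x - y‖ ^ k := pow_pos hxy1 k
      field_simp
    rw [hA]
    field_simp
    ring
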